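/- Taylor–Foguel theorem: For a Banach space X, every closed subspace Y of X has property U in X (every functional on Y has a unique norm-preserving extension to X) if and only if the dual space X* is strictly convex. -/

import Mathlib

open NormedSpace

/-- If `‖a‖ ≤ 1`, `s ∈ (0,1]` and `‖(1-s)•a + s•b‖ ≥ 1`, then `‖b‖ ≥ 1`. -/
lemma tf_aux {E : Type*} [NormedAddCommGroup E] [NormedSpace ℝ E] {a b : E} {s : ℝ}
    (ha : ‖a‖ ≤ 1) (hs : 0 < s) (hs1 : s ≤ 1) (hm : 1 ≤ ‖(1 - s) • a + s • b‖) :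
    1 ≤ ‖b‖ := by
  have h1 : ‖(1 - s) • a + s • b‖ ≤ (1 - s) * ‖a‖ + s * ‖b‖ := by
    calc ‖(1 - s) • a + s • b‖ ≤ ‖(1 - s) • a‖ + ‖s • b‖ := norm_add_le _ _
      _ = (1 - s) * ‖a‖ + s * ‖b‖ := by
          rw [norm_smul, norm_smul, Real.norm_of_nonneg (by linarith), Real.norm_of_nonneg hs.le]
  nlinarith [norm_nonneg a, norm_nonneg b]

/-- Key convexity lemma: if `‖f‖ = ‖g‖ = 1` and `‖f + g‖ = 2`, then every point on the
line through `f` and `g` has norm at least `1`. -/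
lemma tf_key {E : Type*} [NormedAddCommGroup E] [NormedSpace ℝ E] {f g : E}
    (hf : ‖f‖ = 1) (hg : ‖g‖ = 1) (hfg : ‖f + g‖ = 2) (t : ℝ) :
    1 ≤ ‖f + t • (g - f)‖ := by
  have hmid : ‖f + (1/2 : ℝ) • (g - f)‖ = 1 := by
    have : f + (1/2 : ℝ) • (g - f) = (1/2 : ℝ) • (f + g) := by module
    rw [this, norm_smul, hfg]; norm_num
  rcases le_or_gt t (1/2) with ht | ht
  · rcases eq_or_lt_of_le ht with rfl | ht
    · rw [hmid]
    · -- use a = g, s = 1/(2*(1-t))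
      have h1t : (0:ℝ) < 1 - t := by linarith
      set s : ℝ := 1 / (2 * (1 - t)) with hsdef
      have hs : 0 < s := by positivity
      have hs1 : s ≤ 1 := by
        rw [hsdef, div_le_one (by positivity)]; linarith
      refine tf_aux (le_of_eq hg) hs hs1 ?_
      have hcombo : (1 - s) • g + s • (f + t • (g - f)) = f + (1/2 : ℝ) • (g - f) := by
        have hst : s * (1 - t) = 1/2 := by
          rw [hsdef]; field_simp
        have : (1 - s) • g + s • (f + t • (g - f))
            = (s * (1 - t)) • f + (1 - s * (1 - t)) • g := by module
        rw [this, hst]; module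
      rw [hcombo, hmid]
  · -- use a = f, s = 1/(2*t)
    have ht0 : (0:ℝ) < t := by linarith
    set s : ℝ := 1 / (2 * t) with hsdef
    have hs : 0 < s := by positivity
    have hs1 : s ≤ 1 := by
      rw [hsdef, div_le_one (by positivity)]; linarith
    refine tf_aux (le_of_eq hf) hs hs1 ?_
    have hcombo : (1 - s) • f + s • (f + t • (g - f)) = f + (1/2 : ℝ) • (g - f) := by
      have hst : s * t = 1/2 := by
        rw [hsdef]; field_simp
      have : (1 - s) • f + s • (f + t • (g - f)) = f + (s * t) • (g - f) := by module
      rw [this, hst]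
    rw [hcombo, hmid]

/-- Taylor–Foguel theorem: every closed subspace of `X` has property U in `X` iff `X*`
is strictly convex. -/
theorem taylor_foguel {X : Type*} [NormedAddCommGroup X] [NormedSpace ℝ X]
    [CompleteSpace X] :
    (∀ Y : Subspace ℝ X, IsClosed (Y : Set X) →
      ∀ g : StrongDual ℝ Y, ∃! f : StrongDual ℝ X, (∀ y : Y, f (y : X) = g y) ∧ ‖f‖ = ‖g‖) ↔
    StrictConvexSpace ℝ (StrongDual ℝ X) := by
  constructor
  · intro hU
    refine StrictConvexSpace.of_norm_add_ne_two fun f g hf hg hne hadd => ?_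
    -- the closed hyperplane `Y = ker (f - g)`
    set ψ : StrongDual ℝ X := f - g with hψdef
    have hψ : ψ ≠ 0 := sub_ne_zero.mpr hne
    set Y : Subspace ℝ X := LinearMap.ker (ψ : X →ₗ[ℝ] ℝ) with hYdef
    have hYclosed : IsClosed (Y : Set X) := ContinuousLinearMap.isClosed_ker ψ
    -- the restricted functional
    set h : StrongDual ℝ Y := f.comp Y.subtypeL with hhdef
    have hfg_on_Y : ∀ y : Y, f (y : X) = g (y : X) := by
      intro y
      have : ψ (y : X) = 0 := y.2
      have h0 : f (y : X) - g (y : X) = 0 := this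
      linarith
    -- every point on the line has norm ≥ 1
    have hline : ∀ c : ℝ, 1 ≤ ‖f - c • ψ‖ := by
      intro c
      have : f - c • ψ = f + c • (g - f) := by rw [hψdef]; module
      rw [this]
      exact tf_key hf hg hadd c
    -- ‖h‖ ≤ 1
    have hle : ‖h‖ ≤ 1 := by
      refine ContinuousLinearMap.opNorm_le_bound _ zero_le_one fun y => ?_
      have := f.le_opNorm (y : X)
      simpa [hhdef, hf] using this
    -- ‖h‖ ≥ 1 via Hahn–Banach
    have hge : 1 ≤ ‖h‖ := by
      obtain ⟨F, hFext, hFnorm⟩ := exists_extension_norm_eq Y h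
      -- f - F vanishes on Y = ker ψ, hence f - F = c • ψ
      obtain ⟨x₀, hx₀⟩ : ∃ x₀ : X, ψ x₀ ≠ 0 := by
        by_contra hc
        push_neg at hc
        exact hψ (ContinuousLinearMap.ext fun x => by simp [hc x])
      have hker : ∀ x : X, ψ x = 0 → F x = f x := by
        intro x hx
        have : F (⟨x, hx⟩ : Y) = h (⟨x, hx⟩ : Y) := hFext _
        simpa [hhdef] using this
      set c : ℝ := (f x₀ - F x₀) / ψ x₀ with hcdef
      have hFeq : F = f - c • ψ := by
        ext x
        have hmem : ψ (x - (ψ x / ψ x₀) • x₀) = 0 := by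
          simp [mul_div_assoc]
          field_simp; simp
        have := hker _ hmem
        simp only [map_sub, map_smul, smul_eq_mul] at this
        simp only [ContinuousLinearMap.sub_apply, ContinuousLinearMap.smul_apply, smul_eq_mul,
          hcdef]
        field_simp at this ⊢
        ring_nf at this ⊢
        linarith
      rw [← hFnorm, hFeq]
      exact hline c
    have hnormh : ‖h‖ = 1 := le_antisymm hle hge
    -- f and g are both norm-preserving extensions of h, contradiction
    obtain ⟨F₀, _, huniq⟩ := hU Y hYclosed h
    have h1 : f = F₀ := huniq f ⟨fun y => rfl, by rw [hf, hnormh]⟩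
    have h2 : g = F₀ := huniq g ⟨fun y => (hfg_on_Y y).symm, by rw [hg, hnormh]⟩
    exact hne (h1.trans h2.symm)
  · intro hSC Y _ g
    obtain ⟨f, hext, hnorm⟩ := exists_extension_norm_eq Y g
    refine ⟨f, ⟨hext, hnorm⟩, fun f' ⟨hext', hnorm'⟩ => ?_⟩
    have hnn : ‖f'‖ = ‖f‖ := by rw [hnorm, hnorm']
    refine eq_of_norm_eq_of_norm_add_eq hnn ?_
    have hle : ‖f' + f‖ ≤ ‖f'‖ + ‖f‖ := norm_add_le _ _
    have hge : ‖f'‖ + ‖f‖ ≤ ‖f' + f‖ := by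
      rw [hnorm, hnorm', ← two_mul]
      have hg : ‖g‖ ≤ ‖f' + f‖ / 2 := by
        refine ContinuousLinearMap.opNorm_le_bound _ (by positivity) fun y => ?_
        have h2 : (f' + f) (y : X) = 2 * g y := by
          simp [hext y, hext' y]; ring
        have := (f' + f).le_opNorm (y : X)
        rw [h2] at this
        have hy : ‖(y : X)‖ = ‖y‖ := rfl
        rw [hy] at this
        rw [div_mul_eq_mul_div, le_div_iff₀ (by norm_num : (0:ℝ) < 2)]
        calc ‖g y‖ * 2 = ‖2 * g y‖ := by
              rw [norm_mul]; simp [Real.norm_ofNat]; ring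
          _ ≤ ‖f' + f‖ * ‖y‖ := this
      linarith
    linarith
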